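/- Let P be symmetric positive definite and M := Q + KᵀRK symmetric positive definite, with (A+BK)ᵀP(A+BK) ≼ P - M. Define ρ := 1 - λ_min(P^{-1/2} M P^{-1/2}). Then ρ ∈ [0,1), and for all vectors e, ((A+BK)e)ᵀP((A+BK)e) ≤ ρ · eᵀPe. -/

import Mathlib

open Matrix

section

open scoped ComplexOrder

/-- The square root of a positive semidefinite matrix, as defined in Mathlib (Dec 2024)
as `Matrix.PosSemidef.sqrt` (since removed). -/
noncomputable def Matrix.PosSemidef.sqrt {n 𝕜 : Type*} [Fintype n] [DecidableEq n] [RCLike 𝕜]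
    {A : Matrix n n 𝕜} (hA : A.PosSemidef) : Matrix n n 𝕜 :=
  hA.1.eigenvectorUnitary.1 * diagonal ((↑) ∘ (√·) ∘ hA.1.eigenvalues) *
    (star hA.1.eigenvectorUnitary : Matrix n n 𝕜)

end

private lemma sqrt_posSemidef' {n : ℕ} {A : Matrix (Fin n) (Fin n) ℝ} (hA : A.PosSemidef) :
    hA.sqrt.PosSemidef := by
  unfold Matrix.PosSemidef.sqrt
  rw [star_eq_conjTranspose]
  refine PosSemidef.mul_mul_conjTranspose_same ?_ _
  refine posSemidef_diagonal_iff.mpr fun i => ?_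
  simp [Real.sqrt_nonneg]

private lemma sqrt_mul_self' {n : ℕ} {A : Matrix (Fin n) (Fin n) ℝ} (hA : A.PosSemidef) :
    hA.sqrt * hA.sqrt = A := by
  unfold Matrix.PosSemidef.sqrt
  have hu : (star hA.1.eigenvectorUnitary : Matrix (Fin n) (Fin n) ℝ) *
      hA.1.eigenvectorUnitary.1 = 1 := Unitary.coe_star_mul_self _
  have key : diagonal ((RCLike.ofReal : ℝ → ℝ) ∘ (√·) ∘ hA.1.eigenvalues) *
      diagonal ((RCLike.ofReal : ℝ → ℝ) ∘ (√·) ∘ hA.1.eigenvalues)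
      = diagonal (RCLike.ofReal ∘ hA.1.eigenvalues) := by
    rw [diagonal_mul_diagonal]
    congr 1
    funext i
    simp [Real.mul_self_sqrt (hA.eigenvalues_nonneg i)]
  conv_rhs => rw [hA.1.spectral_theorem, Unitary.conjStarAlgAut_apply, ← key]
  simp only [mul_assoc]
  rw [← mul_assoc (star hA.1.eigenvectorUnitary : Matrix (Fin n) (Fin n) ℝ), hu, one_mul]

private lemma quad_congr {n : ℕ} (X W : Matrix (Fin n) (Fin n) ℝ) (x : Fin n → ℝ) :
    x ⬝ᵥ ((Xᵀ * W * X) *ᵥ x) = (X *ᵥ x) ⬝ᵥ (W *ᵥ (X *ᵥ x)) := by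
  rw [← mulVec_mulVec, ← mulVec_mulVec, dotProduct_mulVec, vecMul_transpose]

/-- Contraction rate from the Riccati identity: with `P ≻ 0`, `M := Q + KᵀRK ≻ 0`
and `(A+BK)ᵀP(A+BK) ≼ P - M`, the number `ρ := 1 - λ_min(P^{-1/2} M P^{-1/2})`
lies in `[0,1)` and gives the one-step contraction
`((A+BK)e)ᵀP((A+BK)e) ≤ ρ · eᵀPe` for all `e`. -/
theorem contraction_rate {n m : ℕ} (hn : 0 < n)
    (A P Q : Matrix (Fin n) (Fin n) ℝ) (B : Matrix (Fin n) (Fin m) ℝ)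
    (K : Matrix (Fin m) (Fin n) ℝ) (R : Matrix (Fin m) (Fin m) ℝ)
    (hP : P.PosDef) (hM : (Q + Kᵀ * R * K).PosDef)
    (hLoewner : ((P - (Q + Kᵀ * R * K)) - (A + B * K)ᵀ * P * (A + B * K)).PosSemidef)
    (S : Matrix (Fin n) (Fin n) ℝ)
    (hSdef : S = (hP.posSemidef.sqrt)⁻¹ * (Q + Kᵀ * R * K) * (hP.posSemidef.sqrt)⁻¹)
    (hS : S.IsHermitian)
    (ρ : ℝ) (hρ : ρ = 1 - ⨅ i, hS.eigenvalues i) :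
    ρ ∈ Set.Ico (0:ℝ) 1 ∧
      ∀ e : Fin n → ℝ,
        ((A + B * K) *ᵥ e) ⬝ᵥ (P *ᵥ ((A + B * K) *ᵥ e)) ≤ ρ * (e ⬝ᵥ (P *ᵥ e)) := by
  haveI : Nonempty (Fin n) := ⟨⟨0, hn⟩⟩
  set M : Matrix (Fin n) (Fin n) ℝ := Q + Kᵀ * R * K with hMdef
  set T : Matrix (Fin n) (Fin n) ℝ := A + B * K with hTdef
  set W : Matrix (Fin n) (Fin n) ℝ := hP.posSemidef.sqrt with hWdef
  set N : Matrix (Fin n) (Fin n) ℝ := W⁻¹ with hNdef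
  set c : ℝ := ⨅ i, hS.eigenvalues i with hcdef
  -- basic facts about the square root
  have hWH : W.IsHermitian := (sqrt_posSemidef' hP.posSemidef).1
  have hWW : W * W = P := sqrt_mul_self' hP.posSemidef
  have hWunit : IsUnit W := by
    rw [Matrix.isUnit_iff_isUnit_det]
    have hdet : W.det * W.det = P.det := by rw [← det_mul, hWW]
    have : P.det ≠ 0 := ne_of_gt hP.det_pos
    exact (by intro h; exact this (by rw [← hdet, h, zero_mul]) : W.det ≠ 0).isUnit
  have hNW : N * W = 1 := nonsing_inv_mul _ (Matrix.isUnit_iff_isUnit_det _ |>.1 hWunit)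
  have hWN : W * N = 1 := mul_nonsing_inv _ (Matrix.isUnit_iff_isUnit_det _ |>.1 hWunit)
  have hNH : N.IsHermitian := hWH.inv
  have hNT : Nᵀ = N := by
    have := hNH; rwa [IsHermitian, conjTranspose_eq_transpose_of_trivial] at this
  have hWT : Wᵀ = W := by
    have := hWH; rwa [IsHermitian, conjTranspose_eq_transpose_of_trivial] at this
  have hTT : Tᴴ = Tᵀ := conjTranspose_eq_transpose_of_trivial T
  -- M = W * S * W
  have hMS : M = Wᵀ * S * W := by
    rw [hSdef, hWT]
    calc M = (W * N) * M * (N * W) := by rw [hWN, hNW, one_mul, mul_one]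
    _ = W * (N * M * N) * W := by noncomm_ring
  -- S = Nᵀ * M * N
  have hSN : S = Nᵀ * M * N := by rw [hSdef, hNT]
  -- N * P * N = 1
  have hNPN : Nᵀ * P * N = 1 := by
    rw [hNT, ← hWW]
    calc N * (W * W) * N = (N * W) * (W * N) := by noncomm_ring
    _ = 1 := by rw [hNW, hWN, one_mul]
  -- S is positive definite
  have hNinj : Function.Injective (N.mulVec) :=
    mulVec_injective_iff_isUnit.mpr (Matrix.isUnit_nonsing_inv_iff.mpr hWunit)
  have hSpd : S.PosDef := by
    refine PosDef.of_dotProduct_mulVec_pos hS fun x hx => ?_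
    have hx' : N *ᵥ x ≠ 0 := by
      intro h; apply hx
      apply hNinj; rw [h, mulVec_zero]
    have := hM.dotProduct_mulVec_pos hx'
    simpa [hSN, quad_congr, star_trivial] using this
  -- positivity of c
  have hcpos : 0 < c := by
    obtain ⟨i, hi⟩ := Finite.exists_min (fun i => hS.eigenvalues i)
    exact lt_of_lt_of_le (hSpd.eigenvalues_pos i) (le_ciInf hi)
  -- S - c • 1 is positive semidefinite
  have hU : (hS.eigenvectorUnitary : Matrix (Fin n) (Fin n) ℝ) *
      (hS.eigenvectorUnitary : Matrix (Fin n) (Fin n) ℝ)ᴴ = 1 := by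
    rw [← star_eq_conjTranspose]
    exact (Matrix.mem_unitaryGroup_iff).mp hS.eigenvectorUnitary.2
  have hSsub : (S - c • (1 : Matrix (Fin n) (Fin n) ℝ)).PosSemidef := by
    have hd : (Matrix.diagonal (fun i => hS.eigenvalues i - c)).PosSemidef :=
      posSemidef_diagonal_iff.mpr fun i =>
        sub_nonneg.2 (ciInf_le (Finite.bddBelow_range _) i)
    have hcongr := hd.mul_mul_conjTranspose_same
      (hS.eigenvectorUnitary : Matrix (Fin n) (Fin n) ℝ)
    have heq : (hS.eigenvectorUnitary : Matrix (Fin n) (Fin n) ℝ) *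
        Matrix.diagonal (fun i => hS.eigenvalues i - c) *
        (hS.eigenvectorUnitary : Matrix (Fin n) (Fin n) ℝ)ᴴ
        = S - c • 1 := by
      have hdiag : Matrix.diagonal (RCLike.ofReal ∘ hS.eigenvalues)
          - c • (1 : Matrix (Fin n) (Fin n) ℝ)
          = Matrix.diagonal (fun i => hS.eigenvalues i - c) := by
        rw [← Matrix.diagonal_one, ← Matrix.diagonal_smul, Matrix.diagonal_sub]
        funext i j
        simp [Matrix.diagonal]
      calc (hS.eigenvectorUnitary : Matrix (Fin n) (Fin n) ℝ) *
            Matrix.diagonal (fun i => hS.eigenvalues i - c) *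
            (hS.eigenvectorUnitary : Matrix (Fin n) (Fin n) ℝ)ᴴ
          = (hS.eigenvectorUnitary : Matrix (Fin n) (Fin n) ℝ) *
            (Matrix.diagonal (RCLike.ofReal ∘ hS.eigenvalues) - c • 1) *
            (hS.eigenvectorUnitary : Matrix (Fin n) (Fin n) ℝ)ᴴ := by rw [hdiag]
        _ = (hS.eigenvectorUnitary : Matrix (Fin n) (Fin n) ℝ) *
            Matrix.diagonal (RCLike.ofReal ∘ hS.eigenvalues) *
            (hS.eigenvectorUnitary : Matrix (Fin n) (Fin n) ℝ)ᴴ -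
            c • ((hS.eigenvectorUnitary : Matrix (Fin n) (Fin n) ℝ) *
              (hS.eigenvectorUnitary : Matrix (Fin n) (Fin n) ℝ)ᴴ) := by
          rw [Matrix.mul_sub, Matrix.sub_mul, Matrix.mul_smul, Matrix.smul_mul, mul_one]
        _ = S - c • 1 := by
          rw [hU, ← star_eq_conjTranspose]
          conv_rhs => rw [hS.spectral_theorem, Unitary.conjStarAlgAut_apply]
    rwa [heq] at hcongr
  -- key eigenvalue bound: ∀ y, c * (y ⬝ᵥ y) ≤ y ⬝ᵥ (S *ᵥ y)
  have hkey : ∀ y : Fin n → ℝ, c * (y ⬝ᵥ y) ≤ y ⬝ᵥ (S *ᵥ y) := by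
    intro y
    have := hSsub.dotProduct_mulVec_nonneg y
    simp only [star_trivial, sub_mulVec, dotProduct_sub, smul_mulVec, one_mulVec,
      dotProduct_smul, smul_eq_mul] at this
    linarith
  -- P - M is positive semidefinite
  have hPM : (P - M).PosSemidef := by
    have h2 : (Tᵀ * P * T).PosSemidef := by
      rw [← hTT]; exact hP.posSemidef.conjTranspose_mul_mul_same T
    have := hLoewner.add h2
    simpa using this
  -- 1 - S is positive semidefinite
  have h1S : ((1 : Matrix (Fin n) (Fin n) ℝ) - S).PosSemidef := by
    have := hPM.conjTranspose_mul_mul_same N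
    rw [conjTranspose_eq_transpose_of_trivial] at this
    have heq : Nᵀ * (P - M) * N = 1 - S := by
      rw [Matrix.mul_sub, Matrix.sub_mul, hNPN, ← hSN]
    rwa [heq] at this
  -- c ≤ 1
  have hc1 : c ≤ 1 := by
    set i0 : Fin n := ⟨0, hn⟩
    set v : Fin n → ℝ := ⇑(hS.eigenvectorBasis i0) with hvdef
    have hvv : v ⬝ᵥ v = 1 := by
      have hnorm : ‖hS.eigenvectorBasis i0‖ = 1 := hS.eigenvectorBasis.orthonormal.1 i0
      have : (inner ℝ (hS.eigenvectorBasis i0) (hS.eigenvectorBasis i0) : ℝ) = 1 := by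
        rw [real_inner_self_eq_norm_sq, hnorm]; norm_num
      rw [EuclideanSpace.inner_eq_star_dotProduct] at this
      simpa [star_trivial] using this
    have hSv : S *ᵥ v = hS.eigenvalues i0 • v := hS.mulVec_eigenvectorBasis i0
    have := h1S.dotProduct_mulVec_nonneg v
    simp only [star_trivial, sub_mulVec, one_mulVec, dotProduct_sub, hSv,
      dotProduct_smul, smul_eq_mul, hvv, mul_one] at this
    have hle : hS.eigenvalues i0 ≤ 1 := by linarith
    exact le_trans (ciInf_le (Finite.bddBelow_range _) i0) hle
  constructor
  · constructor
    · rw [hρ]; linarith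
    · rw [hρ]; linarith
  · intro e
    have hLo := hLoewner.dotProduct_mulVec_nonneg e
    simp only [star_trivial, sub_mulVec, dotProduct_sub] at hLo
    have hTe : e ⬝ᵥ ((Tᵀ * P * T) *ᵥ e) = (T *ᵥ e) ⬝ᵥ (P *ᵥ (T *ᵥ e)) := quad_congr T P e
    have hMe : e ⬝ᵥ (M *ᵥ e) = (W *ᵥ e) ⬝ᵥ (S *ᵥ (W *ᵥ e)) := by
      rw [hMS]; exact quad_congr W S e
    have hPe : e ⬝ᵥ (P *ᵥ e) = (W *ᵥ e) ⬝ᵥ (W *ᵥ e) := by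
      have : P = Wᵀ * 1 * W := by rw [mul_one, hWT, hWW]
      conv_lhs => rw [this]
      rw [quad_congr, one_mulVec]
    have hkey' := hkey (W *ᵥ e)
    rw [← hMe, ← hPe] at hkey'
    rw [hρ]
    rw [hTdef] at hTe hLo ⊢
    rw [← hTe]
    nlinarith [hLo, hkey']
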